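/- Every infinite, connected, locally finite simple graph G contains an infinite isometric path: there exists an injective map f : ℕ → V(G) such that the graph distance satisfies d_G(f(i), f(j)) = |i − j| for all i, j ∈ ℕ. -/

import Mathlib

open SimpleGraph

/-- An induced path of length `n` in `G`: an injective sequence of `n+1` vertices,
adjacent exactly when consecutive. -/
def IsInducedPath {V : Type*} (G : SimpleGraph V) {n : ℕ} (x : Fin (n + 1) → V) : Prop :=
  Function.Injective x ∧ ∀ i j, G.Adj (x i) (x j) ↔ Nat.dist i.val j.val = 1

/-- `G` contains finite induced paths of unbounded length. -/
def HasUnboundedPaths {V : Type*} (G : SimpleGraph V) : Prop :=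
  ∀ n : ℕ, ∃ x : Fin (n + 1) → V, IsInducedPath G x

/-- `G` is path-minimal. -/
def PathMinimal {V : Type*} (G : SimpleGraph V) : Prop :=
  HasUnboundedPaths G ∧
    ∀ A : Set V, HasUnboundedPaths (G.induce A) → Nonempty (G ↪g G.induce A)

/-- The age of `G` is contained in the age of `H`. -/
def AgeSubset {V W : Type*} (G : SimpleGraph V) (H : SimpleGraph W) : Prop :=
  ∀ (n : ℕ) (F : SimpleGraph (Fin n)), Nonempty (F ↪g G) → Nonempty (F ↪g H)

/-- The age of `G` contains no infinite antichain for embeddability. -/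
def AgeWQO {V : Type*} (G : SimpleGraph V) : Prop :=
  ∀ f : ℕ → Σ n : ℕ, SimpleGraph (Fin n),
    (∀ i, Nonempty ((f i).2 ↪g G)) →
    ∃ i j, i ≠ j ∧ Nonempty ((f i).2 ↪g (f j).2)

/-- The set `A` carries an induced path of length `n` of `G` (covering all of `A`). -/
def IsPathOn {V : Type*} (G : SimpleGraph V) (A : Set V) (n : ℕ) : Prop :=
  ∃ x : Fin (n + 1) → V, Function.Injective x ∧ Set.range x = A ∧
    ∀ i j, G.Adj (x i) (x j) ↔ Nat.dist i.val j.val = 1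

/-- `G` embeds a direct sum of finite induced paths of unbounded length. -/
def EmbedsDirectSumOfPaths {V : Type*} (G : SimpleGraph V) : Prop :=
  ∃ A : ℕ → Set V, (∀ n, (A n).Finite) ∧
    (∀ m n, m ≠ n → Disjoint (A m) (A n)) ∧
    (∀ m n, m ≠ n → ∀ x ∈ A m, ∀ y ∈ A n, ¬ G.Adj x y) ∧
    ∀ n, ∃ m, n ≤ m ∧ IsPathOn G (A n) m

/-- `G` embeds a complete sum of finite induced paths of unbounded length. -/
def EmbedsCompleteSumOfPaths {V : Type*} (G : SimpleGraph V) : Prop :=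
  ∃ A : ℕ → Set V, (∀ n, (A n).Finite) ∧
    (∀ m n, m ≠ n → Disjoint (A m) (A n)) ∧
    (∀ m n, m ≠ n → ∀ x ∈ A m, ∀ y ∈ A n, G.Adj x y) ∧
    ∀ n, ∃ m, n ≤ m ∧ IsPathOn G (A n) m

/-- An isometric path of length `n` in `G`. -/
def IsIsometricPath {V : Type*} (G : SimpleGraph V) {n : ℕ} (x : Fin (n + 1) → V) : Prop :=
  (∀ i : Fin n, G.Adj (x i.castSucc) (x i.succ)) ∧
  ∀ i j, G.dist (x i) (x j) = Nat.dist i.val j.val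

/-- The set `A` carries an induced path of length `n` of `G` which is isometric in `G`. -/
def IsIsometricPathOn {V : Type*} (G : SimpleGraph V) (A : Set V) (n : ℕ) : Prop :=
  ∃ x : Fin (n + 1) → V, Function.Injective x ∧ Set.range x = A ∧
    (∀ i j, G.Adj (x i) (x j) ↔ Nat.dist i.val j.val = 1) ∧
    (∀ i j, G.dist (x i) (x j) = Nat.dist i.val j.val)

/-- The incomparability graph of a poset. -/
def incGraph (α : Type*) [PartialOrder α] : SimpleGraph α where
  Adj a b := ¬ a ≤ b ∧ ¬ b ≤ a
  symm := ⟨fun _ _ h => ⟨h.2, h.1⟩⟩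
  loopless := ⟨fun _ h => h.1 le_rfl⟩

/-- `w` is a (finite) factor of the infinite word `u`. -/
def IsFactor {A : Type*} (u : ℕ → A) (w : List A) : Prop :=
  ∃ p : ℕ, w = (List.range w.length).map fun i => u (p + i)

/-- `u` is uniformly recurrent. -/
def UniformlyRecurrent {A : Type*} (u : ℕ → A) : Prop :=
  ∀ n : ℕ, ∃ m : ℕ, ∀ v w : List A, IsFactor u v → IsFactor u w →
    v.length = n → w.length = m → v <:+: w

/-- The set of factors of `u` is inexhaustible. -/
def Inexhaustible {A : Type*} (u : ℕ → A) : Prop :=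
  ∀ v v' : List A, IsFactor u v → IsFactor u v' → ∃ w : List A, IsFactor u (v ++ w ++ v')

/-- The path on `n` vertices. -/
def pathG (n : ℕ) : SimpleGraph (Fin n) where
  Adj i j := Nat.dist i.val j.val = 1
  symm := ⟨fun i j h => by rwa [Nat.dist_comm]⟩
  loopless := ⟨fun i h => by simp [Nat.dist_self] at h⟩

/-- The graph `Ĝ_k` on `ℕ × ℕ`. -/
def Ghat (k : ℕ) : SimpleGraph (ℕ × ℕ) where
  Adj a b := (a.1 = b.1 ∧ Nat.dist a.2 b.2 = 1) ∨ (a.1 ≠ b.1 ∧ ¬ a.2 ≡ b.2 [MOD k])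
  symm := by
    refine ⟨fun a b h => ?_⟩
    rcases h with ⟨h1, h2⟩ | ⟨h1, h2⟩
    · exact Or.inl ⟨h1.symm, by rwa [Nat.dist_comm]⟩
    · exact Or.inr ⟨h1.symm, fun h => h2 h.symm⟩
  loopless := by
    refine ⟨fun a h => ?_⟩
    rcases h with ⟨_, h2⟩ | ⟨h1, _⟩
    · simp [Nat.dist_self] at h2
    · exact h1 rfl

/-- The vertex set of `Q̂_k`. -/
def Qset : Set (ℕ × ℕ) := {p : ℕ × ℕ | p.2 < p.1 + 5}

/-- The graph `Q̂_k`, induced by `Ĝ_k` on `Qset`. -/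
def Qhat (k : ℕ) : SimpleGraph Qset := (Ghat k).induce Qset

/-- `M` is a module (autonomous set) of `G`. -/
def IsModule {V : Type*} (G : SimpleGraph V) (M : Set V) : Prop :=
  ∀ v ∉ M, (∀ x ∈ M, G.Adj v x) ∨ (∀ x ∈ M, ¬ G.Adj v x)

/-- A trivial subset of a vertex set: empty, a singleton, or everything. -/
def IsTrivialSet {V : Type*} (M : Set V) : Prop :=
  M = ∅ ∨ (∃ v, M = {v}) ∨ M = Set.univ

/-- The graph `Ĝ_{u,⊕}` associated with the word `u : ℕ → Bool` and the Boolean sum. -/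
def GhatXor (u : ℕ → Bool) : SimpleGraph (ℕ × ℕ) where
  Adj a b := (a.1 = b.1 ∧ Nat.dist a.2 b.2 = 1) ∨ (a.1 ≠ b.1 ∧ u a.2 ≠ u b.2)
  symm := by
    refine ⟨fun a b h => ?_⟩
    rcases h with ⟨h1, h2⟩ | ⟨h1, h2⟩
    · exact Or.inl ⟨h1.symm, by rwa [Nat.dist_comm]⟩
    · exact Or.inr ⟨h1.symm, h2.symm⟩
  loopless := by
    refine ⟨fun a h => ?_⟩
    rcases h with ⟨_, h2⟩ | ⟨h1, _⟩
    · simp [Nat.dist_self] at h2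
    · exact h1 rfl

/-- The graph `Ĝ_{u,π₂}` associated with the word `u : ℕ → Bool` and the second projection. -/
def GhatPi2 (u : ℕ → Bool) : SimpleGraph (ℕ × ℕ) where
  Adj a b := (a.1 = b.1 ∧ Nat.dist a.2 b.2 = 1) ∨
    (a.1 < b.1 ∧ u b.2 = true) ∨ (b.1 < a.1 ∧ u a.2 = true)
  symm := by
    refine ⟨fun a b h => ?_⟩
    rcases h with ⟨h1, h2⟩ | ⟨h1, h2⟩ | ⟨h1, h2⟩
    · exact Or.inl ⟨h1.symm, by rwa [Nat.dist_comm]⟩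
    · exact Or.inr (Or.inr ⟨h1, h2⟩)
    · exact Or.inr (Or.inl ⟨h1, h2⟩)
  loopless := by
    refine ⟨fun a h => ?_⟩
    rcases h with ⟨_, h2⟩ | ⟨h1, _⟩ | ⟨h1, _⟩
    · simp [Nat.dist_self] at h2
    · exact lt_irrefl _ h1
    · exact lt_irrefl _ h1

/-- `u` has a constant factor of length `m`. -/
def HasConstFactor (u : ℕ → Bool) (m : ℕ) : Prop :=
  ∃ p : ℕ, ∀ i < m, u (p + i) = u p

private lemma aux_dist_getVert_le {V : Type*} {G : SimpleGraph V} (hconn : G.Connected)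
    {u w : V} (p : G.Walk u w) (i : ℕ) : G.dist u (p.getVert i) ≤ i := by
  induction p generalizing i with
  | nil => simp [SimpleGraph.Walk.getVert, SimpleGraph.dist_self]
  | @cons a b c h q ih =>
    cases i with
    | zero => simp [SimpleGraph.Walk.getVert, SimpleGraph.dist_self]
    | succ i =>
      have h1 : G.dist a (q.getVert i) ≤ G.dist a b + G.dist b (q.getVert i) :=
        hconn.dist_triangle
      have h2 : G.dist a b ≤ 1 := by
        simpa using SimpleGraph.dist_le h.toWalk
      have := ih i
      simp only [SimpleGraph.Walk.getVert_cons_succ]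
      omega

private lemma aux_dist_getVert_right {V : Type*} {G : SimpleGraph V}
    {u w : V} (p : G.Walk u w) (i : ℕ) : G.dist (p.getVert i) w ≤ p.length - i := by
  induction p generalizing i with
  | nil => simp [SimpleGraph.Walk.getVert, SimpleGraph.dist_self]
  | @cons a b c h q ih =>
    cases i with
    | zero =>
      simpa [SimpleGraph.Walk.getVert] using SimpleGraph.dist_le (SimpleGraph.Walk.cons h q)
    | succ i =>
      simp only [SimpleGraph.Walk.getVert_cons_succ, SimpleGraph.Walk.length_cons]
      have := ih i
      omega

private lemma aux_ivt {g : ℕ → ℕ} (h0 : g 0 = 0) (hs : ∀ i, g (i + 1) ≤ g i + 1)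
    {n L : ℕ} (hL : n ≤ g L) : ∃ i, g i = n := by
  have hex : ∃ i, n ≤ g i := ⟨L, hL⟩
  have hfind : n ≤ g (Nat.find hex) := Nat.find_spec hex
  cases hni : Nat.find hex with
  | zero => rw [hni] at hfind; exact ⟨0, by omega⟩
  | succ k =>
    rw [hni] at hfind
    have hk : ¬ n ≤ g k := Nat.find_min hex (by omega)
    have := hs k
    exact ⟨k + 1, by omega⟩

/-- Balls are finite in a locally finite connected graph. -/
private lemma aux_ball_finite {V : Type*} {G : SimpleGraph V} (hconn : G.Connected)
    (hlf : ∀ v : V, (G.neighborSet v).Finite) (v0 : V) (n : ℕ) :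
    {v : V | G.dist v0 v ≤ n}.Finite := by
  induction n with
  | zero =>
    refine Set.Finite.subset (Set.finite_singleton v0) ?_
    intro v hv
    have : G.dist v0 v = 0 := Nat.le_zero.mp hv
    have := (hconn.dist_eq_zero_iff).mp this
    simp [this]
  | succ n ih =>
    refine Set.Finite.subset (ih.union (ih.biUnion (fun w _ => hlf w))) ?_
    intro v hv
    simp only [Set.mem_setOf_eq] at hv
    rcases Nat.lt_or_ge (G.dist v0 v) (n + 1) with h | h
    · exact Or.inl (by simpa using Nat.lt_succ_iff.mp h)
    · have hd : G.dist v0 v = n + 1 := le_antisymm hv h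
      obtain ⟨p, hp⟩ := (hconn v0 v).exists_walk_length_eq_dist
      refine Or.inr ?_
      refine Set.mem_biUnion (aux_dist_getVert_le hconn p n) ?_
      have hlt : n < p.length := by omega
      have hadj := p.adj_getVert_succ hlt
      have hv' : p.getVert (n + 1) = v := by
        rw [← hp] at hd
        rw [← hd]; exact p.getVert_length
      rw [hv'] at hadj
      exact hadj

/-- There exist vertices at every distance. -/
private lemma aux_sphere {V : Type*} {G : SimpleGraph V} [Infinite V] (hconn : G.Connected)
    (hlf : ∀ v : V, (G.neighborSet v).Finite) (v0 : V) (n : ℕ) :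
    ∃ v : V, G.dist v0 v = n := by
  have hball := aux_ball_finite hconn hlf v0 n
  have : ¬ (Set.univ : Set V) ⊆ {v : V | G.dist v0 v ≤ n} :=
    fun h => (Set.infinite_univ (α := V)) (hball.subset h)
  obtain ⟨v, -, hv⟩ := Set.not_subset.mp this
  simp only [Set.mem_setOf_eq, not_le] at hv
  obtain ⟨p, hp⟩ := (hconn v0 v).exists_walk_length_eq_dist
  have hsteps : ∀ i, G.dist v0 (p.getVert (i + 1)) ≤ G.dist v0 (p.getVert i) + 1 := by
    intro i
    rcases Nat.lt_or_ge i p.length with h | h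
    · have hadj := p.adj_getVert_succ h
      have h1 : G.dist v0 (p.getVert (i + 1)) ≤
          G.dist v0 (p.getVert i) + G.dist (p.getVert i) (p.getVert (i + 1)) :=
        hconn.dist_triangle
      have h2 : G.dist (p.getVert i) (p.getVert (i + 1)) ≤ 1 := by
        simpa using SimpleGraph.dist_le hadj.toWalk
      omega
    · rw [p.getVert_of_length_le h, p.getVert_of_length_le (by omega)]
      omega
  have hend : n ≤ G.dist v0 (p.getVert p.length) := by
    simp only [p.getVert_length]; omega
  obtain ⟨i, hi⟩ := aux_ivt (g := fun i => G.dist v0 (p.getVert i))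
    (by simp [SimpleGraph.dist_self]) hsteps hend
  exact ⟨p.getVert i, hi⟩

theorem exists_infinite_isometric_path {V : Type*} (G : SimpleGraph V) [Infinite V]
    (hconn : G.Connected) (hlf : ∀ v : V, (G.neighborSet v).Finite) :
    ∃ f : ℕ → V, Function.Injective f ∧ ∀ i j : ℕ, G.dist (f i) (f j) = Nat.dist i j := by
  classical
  obtain ⟨v0⟩ := (inferInstance : Nonempty V)
  set Good : V → Prop :=
    fun v => ∀ m : ℕ, ∃ w, G.dist v w = m ∧ G.dist v0 w = G.dist v0 v + m with hGood
  have hv0 : Good v0 := by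
    intro m
    obtain ⟨w, hw⟩ := aux_sphere hconn hlf v0 m
    exact ⟨w, hw, by simp [hw]⟩
  have step : ∀ v, Good v → ∃ u, G.Adj v u ∧ G.dist v0 u = G.dist v0 v + 1 ∧ Good u := by
    intro v hv
    set n := G.dist v0 v with hn
    have hcand : ∀ m : ℕ, ∃ u : G.neighborSet v, G.dist v0 u = n + 1 ∧
        ∃ w, G.dist (u : V) w = m ∧ G.dist v0 w = n + 1 + m := by
      intro m
      obtain ⟨w, hw1, hw2⟩ := hv (m + 1)
      obtain ⟨p, hp⟩ := (hconn v w).exists_walk_length_eq_dist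
      rw [hw1] at hp
      cases p with
      | nil => simp at hp
      | @cons _ b _ h q =>
        have hq : q.length = m := by simpa using hp
        have hbw : G.dist b w ≤ m := hq ▸ SimpleGraph.dist_le q
        have hb1 : G.dist v0 b ≤ n + 1 := by
          have h1 : G.dist v0 b ≤ G.dist v0 v + G.dist v b := hconn.dist_triangle
          have h2 : G.dist v b ≤ 1 := by simpa using SimpleGraph.dist_le h.toWalk
          omega
        have h3 : G.dist v0 w ≤ G.dist v0 b + G.dist b w := hconn.dist_triangle
        have hb2 : G.dist v0 b = n + 1 := by omega
        have hbw' : G.dist b w = m := by omega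
        exact ⟨⟨b, h⟩, hb2, w, hbw', by omega⟩
    choose c hc1 hc2 using hcand
    haveI : Finite (G.neighborSet v) := (hlf v).to_subtype
    obtain ⟨u, hu⟩ := Finite.exists_infinite_fiber c
    rw [Set.infinite_coe_iff] at hu
    have hdu : G.dist v0 u = n + 1 := by
      obtain ⟨m, hm, -⟩ := hu.exists_gt 0
      have := hc1 m; rw [hm] at this; exact this
    refine ⟨u, u.2, hdu, ?_⟩
    intro m
    obtain ⟨m', hm', hmm'⟩ := hu.exists_gt m
    have hcm' : c m' = u := hm'
    obtain ⟨w', hw'1, hw'2⟩ := hc2 m'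
    simp only [hcm'] at hw'1 hw'2
    obtain ⟨p, hp⟩ := (hconn (u : V) w').exists_walk_length_eq_dist
    rw [hw'1] at hp
    set w := p.getVert m with hwdef
    have h1 : G.dist (u : V) w ≤ m := aux_dist_getVert_le hconn p m
    have h2 : G.dist w w' ≤ m' - m := by
      have h := aux_dist_getVert_right p m
      rw [← hwdef] at h
      omega
    have h3 : G.dist v0 w' ≤ G.dist v0 w + G.dist w w' := hconn.dist_triangle
    have h4 : G.dist v0 w ≤ G.dist v0 (u : V) + G.dist (u : V) w := hconn.dist_triangle
    have h5 : G.dist (u : V) w ≥ m := by omega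
    refine ⟨w, by omega, by omega⟩
  choose nxt h1 h2 h3 using step
  set F : ℕ → {v : V // Good v} :=
    fun n => Nat.rec ⟨v0, hv0⟩ (fun _ p => ⟨nxt p.1 p.2, h3 p.1 p.2⟩) n with hF
  set f : ℕ → V := fun n => (F n).1 with hf
  have hadj : ∀ n, G.Adj (f n) (f (n + 1)) := fun n => h1 (F n).1 (F n).2
  have hd : ∀ n, G.dist v0 (f n) = n := by
    intro n
    induction n with
    | zero => simp [f, F]
    | succ n ih =>
      have : G.dist v0 (f (n + 1)) = G.dist v0 (f n) + 1 := h2 (F n).1 (F n).2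
      omega
  have hub : ∀ i k, G.dist (f i) (f (i + k)) ≤ k := by
    intro i k
    induction k with
    | zero => simp
    | succ k ih =>
      have h1' : G.dist (f i) (f (i + k + 1)) ≤
          G.dist (f i) (f (i + k)) + G.dist (f (i + k)) (f (i + k + 1)) := hconn.dist_triangle
      have h2' : G.dist (f (i + k)) (f (i + k + 1)) ≤ 1 := by
        simpa using SimpleGraph.dist_le (hadj (i + k)).toWalk
      have : i + (k + 1) = i + k + 1 := by omega
      rw [this]
      omega
  have main : ∀ i j : ℕ, G.dist (f i) (f j) = Nat.dist i j := by
    have key : ∀ i j : ℕ, i ≤ j → G.dist (f i) (f j) = j - i := by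
      intro i j hij
      obtain ⟨k, rfl⟩ := Nat.exists_eq_add_of_le hij
      have hup := hub i k
      have hlo : G.dist v0 (f (i + k)) ≤ G.dist v0 (f i) + G.dist (f i) (f (i + k)) :=
        hconn.dist_triangle
      rw [hd i, hd (i + k)] at hlo
      omega
    intro i j
    rcases Nat.le_total i j with h | h
    · rw [key i j h, Nat.dist]; omega
    · rw [SimpleGraph.dist_comm, key j i h, Nat.dist]; omega
  refine ⟨f, ?_, main⟩
  intro i j hij
  have := main i j
  rw [hij, SimpleGraph.dist_self] at this
  have : Nat.dist i j = 0 := this.symm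
  rw [Nat.dist] at this
  omega
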